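/- Let p ∈ (0,1] and a ∈ [0,∞). Then 1 + p(p+1) ∫₀^a ∫₀^t t^{-2} u² max{1,u}^{p-2} du dt equals 1 + (p(p+1)/6) a² if a ∈ [0,1], and equals a^p + p(2-p)/(3a) + p(p-1)/2 if a > 1. -/

import Mathlib

open MeasureTheory intervalIntegral Set

theorem stmt_5 (p : ℝ) (hp : p ∈ Set.Ioc (0 : ℝ) 1) (a : ℝ) (ha : 0 ≤ a) :
    (a ≤ 1 →
      1 + p * (p + 1) *
          ∫ t in (0 : ℝ)..a, ∫ u in (0 : ℝ)..t, t ^ (-2 : ℤ) * u ^ 2 * (max 1 u) ^ (p - 2) =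
        1 + p * (p + 1) / 6 * a ^ 2) ∧
    (1 < a →
      1 + p * (p + 1) *
          ∫ t in (0 : ℝ)..a, ∫ u in (0 : ℝ)..t, t ^ (-2 : ℤ) * u ^ 2 * (max 1 u) ^ (p - 2) =
        a ^ p + p * (2 - p) / (3 * a) + p * (p - 1) / 2) := by
  obtain ⟨hp0, hp1⟩ := hp
  have hp1' : (0:ℝ) < p + 1 := by linarith
  have hp1'' : p + 1 ≠ 0 := ne_of_gt hp1'
  have hpne : p ≠ 0 := ne_of_gt hp0
  have hcont : Continuous fun u : ℝ => u ^ 2 * (max 1 u) ^ (p - 2) := by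
    refine (continuous_pow 2).mul ?_
    exact (continuous_const.max continuous_id).rpow_const
      (fun x => Or.inl (by positivity))
  have hF1 : ∀ t : ℝ, 0 ≤ t → t ≤ 1 →
      (∫ u in (0:ℝ)..t, u ^ 2 * (max 1 u) ^ (p - 2)) = t ^ 3 / 3 := by
    intro t ht0 ht1
    rw [intervalIntegral.integral_congr (g := fun u : ℝ => u ^ 2)]
    · simp [integral_pow]; norm_num
    · intro u hu
      rw [Set.uIcc_of_le ht0] at hu
      have : max 1 u = 1 := max_eq_left (hu.2.trans ht1)
      simp [this]
  have hFbig : ∀ t : ℝ, 1 ≤ t →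
      (∫ u in (0:ℝ)..t, u ^ 2 * (max 1 u) ^ (p - 2)) =
        1 / 3 + (t ^ (p + 1) - 1) / (p + 1) := by
    intro t ht
    rw [← intervalIntegral.integral_add_adjacent_intervals (b := (1:ℝ))
      (hcont.intervalIntegrable 0 1) (hcont.intervalIntegrable 1 t)]
    rw [hF1 1 zero_le_one le_rfl]
    have h2 : (∫ u in (1:ℝ)..t, u ^ 2 * (max 1 u) ^ (p - 2)) =
        ∫ u in (1:ℝ)..t, u ^ (p : ℝ) := by
      refine intervalIntegral.integral_congr fun u hu => ?_
      rw [Set.uIcc_of_le ht] at hu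
      have hu1 : (1:ℝ) ≤ u := hu.1
      have hu0 : (0:ℝ) < u := lt_of_lt_of_le one_pos hu1
      rw [max_eq_right hu1, ← Real.rpow_natCast u 2, ← Real.rpow_add hu0]
      norm_num
    rw [h2, integral_rpow (Or.inl (by linarith))]
    rw [Real.one_rpow]
    norm_num
  have hg1 : ∀ t ∈ Set.Icc (0:ℝ) 1,
      (∫ u in (0:ℝ)..t, t ^ (-2 : ℤ) * u ^ 2 * (max 1 u) ^ (p - 2)) = t / 3 := by
    rintro t ⟨ht0, ht1⟩
    rcases eq_or_lt_of_le ht0 with rfl | ht0'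
    · simp
    · have h1 : (∫ u in (0:ℝ)..t, t ^ (-2 : ℤ) * u ^ 2 * (max 1 u) ^ (p - 2)) =
          t ^ (-2 : ℤ) * ∫ u in (0:ℝ)..t, u ^ 2 * (max 1 u) ^ (p - 2) := by
        rw [← intervalIntegral.integral_const_mul]
        exact intervalIntegral.integral_congr fun u _ => by ring
      rw [h1, hF1 t ht0 ht1]
      have ht : t ≠ 0 := ne_of_gt ht0'
      rw [zpow_neg, show (2:ℤ) = ((2:ℕ):ℤ) from rfl, zpow_natCast]
      field_simp
  have hg2 : ∀ t : ℝ, 1 ≤ t →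
      (∫ u in (0:ℝ)..t, t ^ (-2 : ℤ) * u ^ 2 * (max 1 u) ^ (p - 2)) =
        (1/3 - 1/(p+1)) * t ^ ((-2 : ℝ)) + (1/(p+1)) * t ^ (p - 1) := by
    intro t ht
    have ht0 : (0:ℝ) < t := lt_of_lt_of_le one_pos ht
    have h1 : (∫ u in (0:ℝ)..t, t ^ (-2 : ℤ) * u ^ 2 * (max 1 u) ^ (p - 2)) =
        t ^ (-2 : ℤ) * ∫ u in (0:ℝ)..t, u ^ 2 * (max 1 u) ^ (p - 2) := by
      rw [← intervalIntegral.integral_const_mul]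
      exact intervalIntegral.integral_congr fun u _ => by ring
    rw [h1, hFbig t ht]
    have hz : t ^ (-2 : ℤ) = t ^ ((-2 : ℝ)) := by
      rw [show ((-2:ℝ)) = ((-2 : ℤ) : ℝ) by norm_num, Real.rpow_intCast]
    have hm : t ^ ((-2:ℝ)) * t ^ (p + 1) = t ^ (p - 1) := by
      rw [← Real.rpow_add ht0]; congr 1; ring
    rw [hz, ← hm]
    field_simp
    ring
  constructor
  · intro ha1
    have h : (∫ t in (0:ℝ)..a, ∫ u in (0:ℝ)..t, t ^ (-2 : ℤ) * u ^ 2 * (max 1 u) ^ (p - 2)) =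
        ∫ t in (0:ℝ)..a, t / 3 := by
      refine intervalIntegral.integral_congr fun t ht => ?_
      rw [Set.uIcc_of_le ha] at ht
      exact hg1 t ⟨ht.1, ht.2.trans ha1⟩
    rw [h, intervalIntegral.integral_div, integral_id]
    ring
  · intro ha1
    have ha1' : (1:ℝ) ≤ a := le_of_lt ha1
    have ha0 : (0:ℝ) < a := lt_of_lt_of_le one_pos ha1'
    have hane : a ≠ 0 := ne_of_gt ha0
    have hnot : (0:ℝ) ∉ Set.uIcc (1:ℝ) a := by
      rw [Set.uIcc_of_le ha1']
      rintro ⟨h, -⟩; linarith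
    set g : ℝ → ℝ := fun t => ∫ u in (0:ℝ)..t, t ^ (-2 : ℤ) * u ^ 2 * (max 1 u) ^ (p - 2)
      with hgdef
    -- integrability of g on [0,1]
    have hgi1 : IntervalIntegrable g volume 0 1 := by
      rw [intervalIntegrable_iff_integrableOn_Icc_of_le zero_le_one]
      refine MeasureTheory.IntegrableOn.congr_fun ?_ (fun t ht => (hg1 t ht).symm)
        measurableSet_Icc
      exact ((continuous_id'.div_const (3:ℝ)).integrableOn_Icc)
    -- the explicit function on [1,a]
    have hexp : ContinuousOn
        (fun t : ℝ => (1/3 - 1/(p+1)) * t ^ ((-2 : ℝ)) + (1/(p+1)) * t ^ (p - 1))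
        (Set.Icc 1 a) := by
      refine ContinuousOn.add ?_ ?_
      · exact continuousOn_const.mul (continuousOn_id.rpow_const fun x hx =>
          Or.inl (ne_of_gt (lt_of_lt_of_le one_pos hx.1)))
      · exact continuousOn_const.mul (continuousOn_id.rpow_const fun x hx =>
          Or.inl (ne_of_gt (lt_of_lt_of_le one_pos hx.1)))
    have hgi2 : IntervalIntegrable g volume 1 a := by
      rw [intervalIntegrable_iff_integrableOn_Icc_of_le ha1']
      refine MeasureTheory.IntegrableOn.congr_fun ?_
        (fun t ht => (hg2 t ht.1).symm) measurableSet_Icc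
      exact hexp.integrableOn_compact isCompact_Icc
    have hsplit : (∫ t in (0:ℝ)..a, g t) = (∫ t in (0:ℝ)..1, g t) + ∫ t in (1:ℝ)..a, g t :=
      (intervalIntegral.integral_add_adjacent_intervals hgi1 hgi2).symm
    have hI1 : (∫ t in (0:ℝ)..1, g t) = 1/6 := by
      have h : (∫ t in (0:ℝ)..1, g t) = ∫ t in (0:ℝ)..1, t / 3 := by
        refine intervalIntegral.integral_congr fun t ht => ?_
        rw [Set.uIcc_of_le zero_le_one] at ht
        exact hg1 t ht
      rw [h, intervalIntegral.integral_div, integral_id]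
      norm_num
    have hI2 : (∫ t in (1:ℝ)..a, g t) =
        (1/3 - 1/(p+1)) * (1 - a⁻¹) + (1/(p+1)) * ((a ^ p - 1) / p) := by
      have h : (∫ t in (1:ℝ)..a, g t) =
          ∫ t in (1:ℝ)..a,
            ((1/3 - 1/(p+1)) * t ^ ((-2 : ℝ)) + (1/(p+1)) * t ^ (p - 1)) := by
        refine intervalIntegral.integral_congr fun t ht => ?_
        rw [Set.uIcc_of_le ha1'] at ht
        exact hg2 t ht.1
      rw [h]
      have hint1 : IntervalIntegrable (fun t : ℝ => (1/3 - 1/(p+1)) * t ^ ((-2:ℝ)))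
          volume 1 a := (intervalIntegrable_rpow (Or.inr hnot)).const_mul _
      have hint2 : IntervalIntegrable (fun t : ℝ => (1/(p+1)) * t ^ (p - 1))
          volume 1 a := (intervalIntegrable_rpow (Or.inr hnot)).const_mul _
      rw [intervalIntegral.integral_add hint1 hint2,
        intervalIntegral.integral_const_mul, intervalIntegral.integral_const_mul,
        integral_rpow (Or.inr ⟨by norm_num, hnot⟩), integral_rpow (Or.inl (by linarith))]
      have e1 : (-2:ℝ) + 1 = -1 := by norm_num
      have e2 : p - 1 + 1 = p := by ring
      rw [e1, e2, Real.one_rpow, Real.rpow_neg_one, Real.one_rpow]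
      field_simp
      ring
    rw [hsplit, hI1, hI2]
    have hfin : 1 + p * (p + 1) *
        (1/6 + ((1/3 - 1/(p+1)) * (1 - a⁻¹) + (1/(p+1)) * ((a ^ p - 1) / p))) =
        a ^ p + p * (2 - p) / (3 * a) + p * (p - 1) / 2 := by
      field_simp
      ring
    linarith [hfin]
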